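/- Let a < b be real numbers and let f : ℝ → ℝ be concave on [a, b] with f(a) ≥ 0 and f(b) ≥ 0. Then for every p ∈ [a, b], ∫_a^b f(x) dx ≥ (b − a)·f(p)/2; i.e., the integral of f over [a, b] is at least the area of the triangle with base [a, b] and apex (p, f(p)). -/

import Mathlib

open intervalIntegral

section aux
variable {a b : ℝ} {f : ℝ → ℝ}

/-- chord lower bound for concave functions -/
lemma concave_chord (hconc : ConcaveOn ℝ (Set.Icc a b) f)
    {u v x : ℝ} (hu : u ∈ Set.Icc a b) (hv : v ∈ Set.Icc a b) (huv : u < v)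
    (hx : x ∈ Set.Icc u v) :
    (v - x) / (v - u) * f u + (x - u) / (v - u) * f v ≤ f x := by
  have hvu : (0:ℝ) < v - u := by linarith
  have hne : v - u ≠ 0 := ne_of_gt hvu
  have h1 : (0:ℝ) ≤ (v - x) / (v - u) := by
    apply div_nonneg <;> linarith [hx.2]
  have h2 : (0:ℝ) ≤ (x - u) / (v - u) := by
    apply div_nonneg <;> linarith [hx.1]
  have h3 : (v - x) / (v - u) + (x - u) / (v - u) = 1 := by field_simp; ring
  have hcc := hconc.2 hu hv h1 h2 h3
  simp only [smul_eq_mul] at hcc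
  have hx' : (v - x) / (v - u) * u + (x - u) / (v - u) * v = x := by
    field_simp
    ring
  rwa [hx'] at hcc

end aux

/-- **Triangle lower bound for the integral of a concave function.**
If `f` is concave on `[a, b]` with `f a ≥ 0` and `f b ≥ 0`, then for every
`p ∈ [a, b]` the integral of `f` over `[a, b]` is at least the area
`(b - a) * f p / 2` of the triangle with base `[a, b]` and apex `(p, f p)`. -/
theorem concave_integral_triangle_bound
    (a b : ℝ) (hab : a < b) (f : ℝ → ℝ)
    (hconc : ConcaveOn ℝ (Set.Icc a b) f)
    (hfa : 0 ≤ f a) (hfb : 0 ≤ f b) :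
    ∀ p ∈ Set.Icc a b, (∫ x in a..b, f x) ≥ (b - a) * f p / 2 := by
  -- nonnegativity of f on [a,b]
  have hnn : ∀ x ∈ Set.Icc a b, 0 ≤ f x := by
    intro x hx
    have h := concave_chord hconc (Set.left_mem_Icc.2 hab.le) (Set.right_mem_Icc.2 hab.le) hab hx
    have h1 : (0:ℝ) ≤ (b - x) / (b - a) := by apply div_nonneg <;> linarith [hx.2]
    have h2 : (0:ℝ) ≤ (x - a) / (b - a) := by apply div_nonneg <;> linarith [hx.1]
    nlinarith
  -- upper bound by 2 * f m
  set m := (a + b) / 2 with hm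
  have hmmem : m ∈ Set.Icc a b := by constructor <;> (simp only [hm]; linarith)
  have hub : ∀ x ∈ Set.Icc a b, f x ≤ 2 * f m := by
    intro x hx
    have hx' : a + b - x ∈ Set.Icc a b := ⟨by linarith [hx.2], by linarith [hx.1]⟩
    have hcc := hconc.2 hx hx' (le_of_lt one_half_pos) (le_of_lt one_half_pos) (by norm_num)
    simp only [smul_eq_mul] at hcc
    have hmid : (1/2 : ℝ) * x + (1/2 : ℝ) * (a + b - x) = m := by
      simp only [hm]; ring
    rw [hmid] at hcc
    have := hnn _ hx'
    linarith
  -- integrability of f on any subinterval of [a,b]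
  have hint : ∀ u v : ℝ, u ∈ Set.Icc a b → v ∈ Set.Icc a b →
      IntervalIntegrable f MeasureTheory.volume u v := by
    have hmain : IntervalIntegrable f MeasureTheory.volume a b := by
      rw [intervalIntegrable_iff_integrableOn_Ioc_of_le hab.le,
        integrableOn_Ioc_iff_integrableOn_Ioo]
      have hcont : ContinuousOn f (Set.Ioo a b) := by
        have := hconc.continuousOn_interior
        rwa [interior_Icc] at this
      have hmeas : MeasureTheory.AEStronglyMeasurable f
          (MeasureTheory.volume.restrict (Set.Ioo a b)) :=
        hcont.aestronglyMeasurable measurableSet_Ioo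
      refine MeasureTheory.Integrable.mono' (MeasureTheory.integrable_const (2 * f m)) hmeas ?_
      filter_upwards [MeasureTheory.ae_restrict_mem measurableSet_Ioo] with x hx
      have hx' : x ∈ Set.Icc a b := Set.Ioo_subset_Icc_self hx
      rw [Real.norm_eq_abs, abs_of_nonneg (hnn x hx')]
      exact hub x hx'
    intro u v hu hv
    exact hmain.mono_set (by rw [Set.uIcc_of_le hab.le]; exact Set.uIcc_subset_Icc hu hv)
  intro p hp
  -- triangle leg computations
  have hleg : ∀ u v c : ℝ, (∫ x in u..v, (x - u) * c) = (v - u)^2 / 2 * c := by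
    intro u v c
    rw [intervalIntegral.integral_mul_const, intervalIntegral.integral_sub
      intervalIntegrable_id intervalIntegrable_const, integral_id, integral_const]
    simp only [smul_eq_mul]; ring
  have hleg' : ∀ u v c : ℝ, (∫ x in u..v, (v - x) * c) = (v - u)^2 / 2 * c := by
    intro u v c
    rw [intervalIntegral.integral_mul_const, intervalIntegral.integral_sub
      intervalIntegrable_const intervalIntegrable_id, integral_id, integral_const]
    simp only [smul_eq_mul]; ring
  have h1 : (∫ x in a..p, f x) ≥ (p - a) * f p / 2 := by
    rcases eq_or_lt_of_le hp.1 with hap | hap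
    · simp [← hap]
    · have hmono : ∀ x ∈ Set.Icc a p, (x - a) * (f p / (p - a)) ≤ f x := by
        intro x hx
        have h := concave_chord hconc (Set.left_mem_Icc.2 hab.le) hp hap hx
        have hc : (0:ℝ) ≤ (p - x) / (p - a) := by apply div_nonneg <;> linarith [hx.2]
        have hle : (x - a) / (p - a) * f p ≤ f x := by nlinarith
        calc (x - a) * (f p / (p - a)) = (x - a) / (p - a) * f p := by ring
          _ ≤ f x := hle
      have hI := intervalIntegral.integral_mono_on hap.le
        (by apply IntervalIntegrable.mul_const
            exact intervalIntegrable_id.sub intervalIntegrable_const)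
        (hint a p (Set.left_mem_Icc.2 hab.le) hp) hmono
      rw [hleg] at hI
      have hpa : (0:ℝ) < p - a := by linarith
      calc (∫ x in a..p, f x) ≥ (p - a)^2 / 2 * (f p / (p - a)) := hI
        _ = (p - a) * f p / 2 := by field_simp
  have h2 : (∫ x in p..b, f x) ≥ (b - p) * f p / 2 := by
    rcases eq_or_lt_of_le hp.2 with hpb | hpb
    · simp [hpb]
    · have hmono : ∀ x ∈ Set.Icc p b, (b - x) * (f p / (b - p)) ≤ f x := by
        intro x hx
        have h := concave_chord hconc hp (Set.right_mem_Icc.2 hab.le) hpb hx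
        have hc : (0:ℝ) ≤ (x - p) / (b - p) := by apply div_nonneg <;> linarith [hx.1]
        have hle : (b - x) / (b - p) * f p ≤ f x := by nlinarith
        calc (b - x) * (f p / (b - p)) = (b - x) / (b - p) * f p := by ring
          _ ≤ f x := hle
      have hI := intervalIntegral.integral_mono_on hpb.le
        (by apply IntervalIntegrable.mul_const
            exact intervalIntegrable_const.sub intervalIntegrable_id)
        (hint p b hp (Set.right_mem_Icc.2 hab.le)) hmono
      rw [hleg'] at hI
      have hbp : (0:ℝ) < b - p := by linarith
      calc (∫ x in p..b, f x) ≥ (b - p)^2 / 2 * (f p / (b - p)) := hI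
        _ = (b - p) * f p / 2 := by field_simp
  have hsplit : (∫ x in a..b, f x) = (∫ x in a..p, f x) + ∫ x in p..b, f x :=
    (intervalIntegral.integral_add_adjacent_intervals
      (hint a p (Set.left_mem_Icc.2 hab.le) hp)
      (hint p b hp (Set.right_mem_Icc.2 hab.le))).symm
  rw [hsplit]
  linarith
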